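/- On an isoradial graph with critical weights, a function f : edges → ℂ is s-holomorphic at an interior vertex z if and only if T(Sf)(e) = 0 for all directed edges e pointing at z, where S is the local projection operator (Sf)(e) = sin(θ_e/2)·Proj(f(e); ℓ_e) and T is the Kac-Ward operator with critical weights x_e = tan(θ_e/2). -/

import Mathlib

open Complex

noncomputable section

attribute [local instance] Classical.propDecidable

/-- Reversal of a directed edge. -/
def rev (e : ℂ × ℂ) : ℂ × ℂ := (e.2, e.1)

/-- The undirected edge underlying a directed edge. -/
def ue (e : ℂ × ℂ) : Sym2 ℂ := s(e.1, e.2)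

/-- The turning angle `∠(e, g) ∈ (-π, π]`. -/
def ang (e g : ℂ × ℂ) : ℝ := Complex.arg ((g.2 - g.1) / (e.2 - e.1))

/-- The counterclockwise angle from `e` to `g`, in `(0, 2π]`. -/
def ccw (e g : ℂ × ℂ) : ℝ := if 0 < ang e g then ang e g else ang e g + 2 * Real.pi

/-- `e₁` and `e₂` are consecutive (in counterclockwise order) directed edges of `D`
pointing at the vertex `z`: no other edge of `D` pointing at `z` lies strictly between
them counterclockwise. -/
def ConsecIn (D : Set (ℂ × ℂ)) (z : ℂ) (e₁ e₂ : ℂ × ℂ) : Prop :=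
  e₁ ∈ D ∧ e₂ ∈ D ∧ e₁.2 = z ∧ e₂.2 = z ∧ e₁ ≠ e₂ ∧
  ∀ g ∈ D, g.2 = z → g ≠ e₁ → g ≠ e₂ → ccw (rev e₁) (rev e₂) ≤ ccw (rev e₁) (rev g)

/-- An isoradial graph, presented by its symmetric set of directed edges together with
the rhombus half-angles `θ_e ∈ (0, π)` of its edges.  The fields `angleSum`,
`consecAngle` and `angAdd` record the basic geometric properties of a rhombic (isoradial)
embedding: the angles `θ` sum to `π` around every vertex, the turning angle between
consecutive incoming edges at a vertex is `θ_{e₁} + θ_{e₂}`, and turning angles at a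
vertex are additive. -/
structure Isoradial where
  D : Set (ℂ × ℂ)
  θ : Sym2 ℂ → ℝ
  nd : ∀ e ∈ D, e.1 ≠ e.2
  symm : ∀ e ∈ D, rev e ∈ D
  finOut : ∀ z : ℂ, {g ∈ D | g.1 = z}.Finite
  θpos : ∀ e ∈ D, 0 < θ (ue e)
  θlt : ∀ e ∈ D, θ (ue e) < Real.pi
  angleSum : ∀ z : ℂ, {g ∈ D | g.1 = z}.Nonempty →
    ∑ g ∈ (finOut z).toFinset, θ (ue g) = Real.pi
  consecAngle : ∀ z e₁ e₂, ConsecIn D z e₁ e₂ → ang e₁ e₂ = θ (ue e₁) + θ (ue e₂)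
  angAdd : ∀ z e₁ e₂ g, ConsecIn D z e₁ e₂ → g ∈ D → g.1 = z →
    g ≠ rev e₁ → g ≠ rev e₂ → ang e₁ e₂ + ang e₂ g = ang e₁ g

/-- The Kac-Ward operator `T = Id - Λ` acting on functions of directed edges (the
transition sum is taken at directed edges of the graph, and `T` acts as the identity on
the orthogonal complement, i.e. away from the graph). -/
def KWop (Γ : Isoradial) (x : Sym2 ℂ → ℝ) (φ : (ℂ × ℂ) → ℂ) (e : ℂ × ℂ) : ℂ :=
  φ e - if e ∈ Γ.D then
    ∑ g ∈ (Γ.finOut e.2).toFinset,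
      if g ≠ rev e then (x (ue e) : ℂ) * Complex.exp (Complex.I * (ang e g : ℂ) / 2) * φ g
      else 0
  else 0

/-- The critical weight system `x_e = tan(θ_e/2)`. -/
def critX (Γ : Isoradial) : Sym2 ℂ → ℝ := fun t => Real.tan (Γ.θ t / 2)

/-- The unit complex number `exp(-i ∠(e)/2)` spanning the line `ℓ_e`. -/
def dirL (e : ℂ × ℂ) : ℂ := Complex.exp (-Complex.I * (Complex.arg (e.2 - e.1) : ℂ) / 2)

/-- The line `ℓ_e = exp(-i ∠(e)/2) ℝ ⊆ ℂ`. -/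
def lineOf (e : ℂ × ℂ) : Set ℂ := {c : ℂ | ∃ r : ℝ, c = dirL e * (r : ℂ)}

/-- Orthogonal projection of `w` onto the line `u·ℝ`. -/
def projL (u w : ℂ) : ℂ := (((w * (starRingEnd ℂ u)).re / Complex.normSq u : ℝ) : ℂ) * u

/-- The operator `S`: `(Sf)(e) = sin(θ_e/2)·Proj(f(e); ℓ_e)`,
mapping functions of undirected edges to elements of `L = ∏_e ℓ_e`. -/
def Sproj (Γ : Isoradial) (f : Sym2 ℂ → ℂ) (e : ℂ × ℂ) : ℂ :=
  ((Real.sin (Γ.θ (ue e) / 2) : ℝ) : ℂ) * projL (dirL e) (f (ue e))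

/-- A unit vector spanning the line `(z - z*)^{-1/2} ℝ = exp(-iθ_{e₁}/2) ℓ_{e₁}` of the
face shared by a pair of consecutive incoming edges `e₁, e₂` at `z` (here `z*` is the
circumcenter of that face). -/
def faceDir (Γ : Isoradial) (e₁ : ℂ × ℂ) : ℂ :=
  Complex.exp (-Complex.I * (Γ.θ (ue e₁) : ℂ) / 2) * dirL e₁

/-- `f` is s-holomorphic at `z`: for every face incident to `z` (equivalently, every pair
of consecutive incoming edges `e₁, e₂` at `z`), the projections of `f(e₁)` and `f(e₂)`
onto the line `(z - z*)^{-1/2} ℝ` of the face coincide. -/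
def SHolAt (Γ : Isoradial) (f : Sym2 ℂ → ℂ) (z : ℂ) : Prop :=
  ∀ e₁ e₂ : ℂ × ℂ, ConsecIn Γ.D z e₁ e₂ →
    projL (faceDir Γ e₁) (f (ue e₁)) = projL (faceDir Γ e₁) (f (ue e₂))

-- basic lemmas
lemma rev_rev (e : ℂ × ℂ) : rev (rev e) = e := rfl

lemma rev_inj : Function.Injective rev := fun a b h => by
  have := congrArg rev h; simpa [rev_rev] using this

lemma ue_rev (e : ℂ × ℂ) : ue (rev e) = ue e := by
  simp [ue, rev, Sym2.eq_swap]

lemma normSq_exp_I_real (t : ℝ) (c : ℂ) (h : c.re = 0) : Complex.normSq (Complex.exp c) = 1 := by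
  rw [Complex.normSq_eq_norm_sq, Complex.norm_exp, h]
  simp

lemma dirL_re_zero (e : ℂ × ℂ) : (-Complex.I * (Complex.arg (e.2 - e.1) : ℂ) / 2).re = 0 := by
  simp

lemma normSq_dirL (e : ℂ × ℂ) : Complex.normSq (dirL e) = 1 :=
  normSq_exp_I_real 0 _ (dirL_re_zero e)

lemma projL_eq (u w : ℂ) (hu : Complex.normSq u = 1) :
    projL u w = (w + u ^ 2 * (starRingEnd ℂ) w) / 2 := by
  have h1 : ((w * (starRingEnd ℂ) u).re : ℂ) =
      (w * (starRingEnd ℂ) u + (starRingEnd ℂ) (w * (starRingEnd ℂ) u)) / 2 := by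
    have := Complex.add_conj (w * (starRingEnd ℂ) u)
    rw [this]; push_cast; ring
  have h2 : (starRingEnd ℂ) u * u = 1 := by
    rw [mul_comm, Complex.mul_conj, hu]; norm_num
  rw [projL, hu]
  push_cast
  rw [div_one, h1]
  rw [map_mul, Complex.conj_conj]
  have : w * (starRingEnd ℂ) u * u = w := by
    rw [mul_assoc, mul_comm ((starRingEnd ℂ) u) u, Complex.mul_conj, hu]; norm_num
  linear_combination this / 2

lemma exp_neg_I_real (t : ℝ) : Complex.exp (-Complex.I * (t : ℂ)) =
    (starRingEnd ℂ) (Complex.exp (Complex.I * (t : ℂ))) := by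
  rw [← Complex.exp_conj]
  congr 1
  simp [Complex.conj_I]

lemma exp_I_arg {x : ℂ} (hx : x ≠ 0) :
    Complex.exp (Complex.I * (Complex.arg x : ℂ)) = x / (‖x‖ : ℂ) := by
  have h := Complex.norm_mul_exp_arg_mul_I x
  have habs : (‖x‖ : ℂ) ≠ 0 := by
    simpa using (norm_ne_zero_iff.mpr hx)
  rw [eq_div_iff habs, mul_comm (Complex.I) _]
  rw [mul_comm] at h
  exact h

lemma sq_dirL (e : ℂ × ℂ) (h : e.1 ≠ e.2) :
    (dirL e) ^ 2 = (starRingEnd ℂ) (e.2 - e.1) / (‖e.2 - e.1‖ : ℂ) := by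
  have hv : e.2 - e.1 ≠ 0 := sub_ne_zero.mpr (Ne.symm h)
  have h1 : (dirL e) ^ 2 = Complex.exp (-Complex.I * (Complex.arg (e.2 - e.1) : ℂ)) := by
    rw [dirL, sq, ← Complex.exp_add]; congr 1; ring
  rw [h1, exp_neg_I_real, exp_I_arg hv, map_div₀]
  congr 1
  · simp

lemma sq_dirL_rev (e : ℂ × ℂ) (h : e.1 ≠ e.2) :
    (dirL (rev e)) ^ 2 = -(dirL e) ^ 2 := by
  rw [sq_dirL _ h, sq_dirL (rev e) (Ne.symm h)]
  have h2 : (rev e).2 - (rev e).1 = -(e.2 - e.1) := by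
    show e.1 - e.2 = -(e.2 - e.1); ring
  rw [h2, map_neg, norm_neg, neg_div]

/-- key relation between the squares of `dirL` of reversals of two edges and their angle -/
lemma sq_dirL_rev_ratio (e g : ℂ × ℂ) (he : e.1 ≠ e.2) (hg : g.1 ≠ g.2) :
    (dirL (rev g)) ^ 2 = Complex.exp (-Complex.I * (ang e g : ℂ)) * (dirL (rev e)) ^ 2 := by
  have hve : e.2 - e.1 ≠ 0 := sub_ne_zero.mpr (Ne.symm he)
  have hvg : g.2 - g.1 ≠ 0 := sub_ne_zero.mpr (Ne.symm hg)
  have hr : (g.2 - g.1) / (e.2 - e.1) ≠ 0 := div_ne_zero hvg hve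
  rw [sq_dirL_rev _ he, sq_dirL_rev _ hg, sq_dirL _ he, sq_dirL _ hg]
  rw [exp_neg_I_real]
  simp only [ang]
  rw [exp_I_arg hr]
  have habse : (‖e.2 - e.1‖ : ℂ) ≠ 0 := by simpa using (norm_ne_zero_iff.mpr hve)
  have habsg : (‖g.2 - g.1‖ : ℂ) ≠ 0 := by simpa using (norm_ne_zero_iff.mpr hvg)
  have hconjne : (starRingEnd ℂ) (e.2 - e.1) ≠ 0 := by
    simp only [ne_eq, map_eq_zero]; exact hve
  have habs2 : ((‖(g.2 - g.1) / (e.2 - e.1)‖ : ℝ) : ℂ)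
      = ((‖g.2 - g.1‖ : ℝ) : ℂ) / ((‖e.2 - e.1‖ : ℝ) : ℂ) := by
    rw [norm_div, Complex.ofReal_div]
  rw [map_div₀, map_div₀, Complex.conj_ofReal, habs2]
  generalize (starRingEnd ℂ) (g.2 - g.1) = cg at *
  generalize hce : (starRingEnd ℂ) (e.2 - e.1) = ce at *
  field_simp

lemma arg_neg_of_arg_pos {x : ℂ} (hx : x ≠ 0) (h : 0 < Complex.arg x) :
    Complex.arg (-x) = Complex.arg x - Real.pi := by
  rcases lt_or_eq_of_le (Complex.arg_le_pi x) with hlt | heq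
  · have him : 0 < x.im := by
      rcases lt_trichotomy x.im 0 with h1 | h1 | h1
      · exact absurd (Complex.arg_neg_iff.mpr h1) (by linarith)
      · exfalso
        rcases le_or_gt 0 x.re with h2 | h2
        · have := Complex.arg_eq_zero_iff.mpr ⟨h2, h1⟩; linarith
        · have := Complex.arg_eq_pi_iff.mpr ⟨h2, h1⟩; linarith
      · exact h1
    exact Complex.arg_neg_eq_arg_sub_pi_of_im_pos him
  · -- arg x = π : x is negative real, -x is positive real
    obtain ⟨hre, him⟩ := Complex.arg_eq_pi_iff.mp heq
    rw [← heq]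
    have : Complex.arg (-x) = 0 := by
      apply Complex.arg_eq_zero_iff.mpr
      constructor
      · simp only [Complex.neg_re]; linarith
      · simp only [Complex.neg_im]; linarith
    rw [this]; linarith [heq]

lemma arg_neg_inv_of_arg_pos {x : ℂ} (hx : x ≠ 0) (h : 0 < Complex.arg x) :
    Complex.arg (-x⁻¹) = Real.pi - Complex.arg x := by
  rcases lt_or_eq_of_le (Complex.arg_le_pi x) with hlt | heq
  · have hinv : Complex.arg x⁻¹ = -Complex.arg x := by
      rw [Complex.arg_inv]; rw [if_neg (by linarith)]
    have him : (x⁻¹).im < 0 := by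
      apply Complex.arg_neg_iff.mp; rw [hinv]; linarith
    rw [Complex.arg_neg_eq_arg_add_pi_of_im_neg him, hinv]; ring
  · have hinv : Complex.arg x⁻¹ = Real.pi := by
      rw [Complex.arg_inv, if_pos heq]
    obtain ⟨hre, him⟩ := Complex.arg_eq_pi_iff.mp hinv
    have : Complex.arg (-x⁻¹) = 0 := by
      apply Complex.arg_eq_zero_iff.mpr
      constructor
      · simp only [Complex.neg_re]; linarith
      · simp only [Complex.neg_im]; linarith
    rw [this, ← heq]; ring

lemma ang_rev_right (a b : ℂ × ℂ) (ha : a.1 ≠ a.2) (hb : b.1 ≠ b.2)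
    (hpos : 0 < ang a b) : ang a (rev b) = ang a b - Real.pi := by
  have hva : a.2 - a.1 ≠ 0 := sub_ne_zero.mpr (Ne.symm ha)
  have hvb : b.2 - b.1 ≠ 0 := sub_ne_zero.mpr (Ne.symm hb)
  have hr : (b.2 - b.1) / (a.2 - a.1) ≠ 0 := div_ne_zero hvb hva
  have h1 : ((rev b).2 - (rev b).1) / (a.2 - a.1) = -((b.2 - b.1) / (a.2 - a.1)) := by
    show (b.1 - b.2) / (a.2 - a.1) = _; ring
  show Complex.arg _ = _
  rw [h1]
  exact arg_neg_of_arg_pos hr hpos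

lemma ang_rev_left (a b : ℂ × ℂ) (ha : a.1 ≠ a.2) (hb : b.1 ≠ b.2)
    (hpos : 0 < ang a b) : ang b (rev a) = Real.pi - ang a b := by
  have hva : a.2 - a.1 ≠ 0 := sub_ne_zero.mpr (Ne.symm ha)
  have hvb : b.2 - b.1 ≠ 0 := sub_ne_zero.mpr (Ne.symm hb)
  have hr : (b.2 - b.1) / (a.2 - a.1) ≠ 0 := div_ne_zero hvb hva
  have h1 : ((rev a).2 - (rev a).1) / (b.2 - b.1) = -((b.2 - b.1) / (a.2 - a.1))⁻¹ := by
    show (a.1 - a.2) / (b.2 - b.1) = _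
    rw [inv_div]
    field_simp
    ring
  show Complex.arg _ = _
  rw [h1]
  exact arg_neg_inv_of_arg_pos hr hpos

lemma euler_plus (x : ℝ) : Complex.exp (Complex.I * (x:ℂ)) =
    (Real.cos x : ℂ) + (Real.sin x : ℂ) * Complex.I := by
  rw [mul_comm, Complex.exp_mul_I, Complex.ofReal_cos, Complex.ofReal_sin]

lemma euler_minus (x : ℝ) : Complex.exp (-Complex.I * (x:ℂ)) =
    (Real.cos x : ℂ) - (Real.sin x : ℂ) * Complex.I := by
  have h : -Complex.I * (x:ℂ) = Complex.I * ((-x : ℝ) : ℂ) := by push_cast; ring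
  rw [h, euler_plus, Real.cos_neg, Real.sin_neg]
  push_cast; ring

lemma euler_one (x : ℝ) : Complex.exp (-Complex.I * (x:ℂ)) *
    ((Real.cos x : ℂ) + (Real.sin x : ℂ) * Complex.I) = 1 := by
  rw [euler_minus]
  have hp : ((Real.sin x : ℂ))^2 + ((Real.cos x : ℂ))^2 = 1 := by
    exact_mod_cast congrArg Complex.ofReal (Real.sin_sq_add_cos_sq x)
  linear_combination hp - ((Real.sin x : ℂ))^2 * Complex.I_sq

lemma euler_one' (x : ℝ) : Complex.exp (Complex.I * (x:ℂ)) *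
    ((Real.cos x : ℂ) - (Real.sin x : ℂ) * Complex.I) = 1 := by
  rw [euler_plus]
  have hp : ((Real.sin x : ℂ))^2 + ((Real.cos x : ℂ))^2 = 1 := by
    exact_mod_cast congrArg Complex.ofReal (Real.sin_sq_add_cos_sq x)
  linear_combination hp - ((Real.sin x : ℂ))^2 * Complex.I_sq

lemma exp_neg_pi_half : Complex.exp (-Complex.I * ((Real.pi/2 : ℝ):ℂ)) = -Complex.I := by
  rw [euler_minus, Real.cos_pi_div_two, Real.sin_pi_div_two]
  push_cast; ring

lemma exp_pi_half : Complex.exp (Complex.I * ((Real.pi/2 : ℝ):ℂ)) = Complex.I := by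
  rw [euler_plus, Real.cos_pi_div_two, Real.sin_pi_div_two]
  push_cast; ring

lemma key1 (t1 t2 : ℝ) (Q w : ℂ) :
    (Real.cos (t1/2) : ℂ) * Complex.exp (-Complex.I * (t1:ℂ)/2) * ((w + Q * (starRingEnd ℂ) w)/2)
      + Complex.exp (Complex.I * (t2:ℂ)/2) * Complex.exp (Complex.I * ((Real.pi - t1 - t2 : ℝ):ℂ)/2) *
        ((Real.sin (t1/2) : ℂ) * ((w + -Q * (starRingEnd ℂ) w)/2))
    = (w + Complex.exp (-Complex.I*(t1:ℂ)) * Q * (starRingEnd ℂ) w)/2 := by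
  have h3 : Complex.exp (Complex.I * (t2:ℂ)/2) * Complex.exp (Complex.I * ((Real.pi - t1 - t2 : ℝ):ℂ)/2)
      = Complex.I * Complex.exp (-Complex.I * ((t1/2 : ℝ):ℂ)) := by
    rw [← Complex.exp_add]
    have : Complex.I * (t2:ℂ)/2 + Complex.I * ((Real.pi - t1 - t2 : ℝ):ℂ)/2
        = Complex.I * ((Real.pi/2 : ℝ):ℂ) + -Complex.I * ((t1/2 : ℝ):ℂ) := by push_cast; ring
    rw [this, Complex.exp_add, exp_pi_half]
  have h4 : Complex.exp (-Complex.I*(t1:ℂ))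
      = Complex.exp (-Complex.I * ((t1/2 : ℝ):ℂ)) * Complex.exp (-Complex.I * ((t1/2 : ℝ):ℂ)) := by
    rw [← Complex.exp_add]; congr 1; push_cast; ring
  have hc : Complex.exp (-Complex.I * (t1:ℂ)/2) = Complex.exp (-Complex.I * ((t1/2 : ℝ):ℂ)) := by
    congr 1; push_cast; ring
  have h1 := euler_one (t1/2)
  have h2 := euler_minus (t1/2)
  rw [hc, h3, h4]
  set Y := Complex.exp (-Complex.I * ((t1/2 : ℝ):ℂ))
  linear_combination (w/2) * h1 - (Q * (starRingEnd ℂ) w * Y / 2) * h2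

lemma key2 (t1 t2 : ℝ) (Q w : ℂ) :
    (Real.cos (t2/2) : ℂ) * Complex.exp (Complex.I * (t2:ℂ)/2) *
        ((w + Complex.exp (-Complex.I*((t1:ℂ)+(t2:ℂ))) * Q * (starRingEnd ℂ) w)/2)
      + Complex.exp (-Complex.I * (t1:ℂ)/2) * Complex.exp (Complex.I * ((t1 + t2 - Real.pi : ℝ):ℂ)/2) *
        ((Real.sin (t2/2) : ℂ) * ((w + -(Complex.exp (-Complex.I*((t1:ℂ)+(t2:ℂ))) * Q) * (starRingEnd ℂ) w)/2))
    = (w + Complex.exp (-Complex.I*(t1:ℂ)) * Q * (starRingEnd ℂ) w)/2 := by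
  have h3 : Complex.exp (-Complex.I * (t1:ℂ)/2) * Complex.exp (Complex.I * ((t1 + t2 - Real.pi : ℝ):ℂ)/2)
      = -Complex.I * Complex.exp (Complex.I * ((t2/2 : ℝ):ℂ)) := by
    rw [← Complex.exp_add]
    have : -Complex.I * (t1:ℂ)/2 + Complex.I * ((t1 + t2 - Real.pi : ℝ):ℂ)/2
        = -Complex.I * ((Real.pi/2 : ℝ):ℂ) + Complex.I * ((t2/2 : ℝ):ℂ) := by push_cast; ring
    rw [this, Complex.exp_add, exp_neg_pi_half]
  have hsplit : Complex.exp (-Complex.I*((t1:ℂ)+(t2:ℂ)))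
      = Complex.exp (-Complex.I*(t1:ℂ)) * Complex.exp (-Complex.I * ((t2/2 : ℝ):ℂ)) *
        Complex.exp (-Complex.I * ((t2/2 : ℝ):ℂ)) := by
    rw [← Complex.exp_add, ← Complex.exp_add]; congr 1; push_cast; ring
  have hc : Complex.exp (Complex.I * (t2:ℂ)/2) = Complex.exp (Complex.I * ((t2/2 : ℝ):ℂ)) := by
    congr 1; push_cast; ring
  have h1 := euler_one' (t2/2)
  have h2 := euler_plus (t2/2)
  have hXY : Complex.exp (Complex.I * ((t2/2 : ℝ):ℂ)) * Complex.exp (-Complex.I * ((t2/2 : ℝ):ℂ)) = 1 := by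
    rw [← Complex.exp_add]
    have : Complex.I * ((t2/2 : ℝ):ℂ) + -Complex.I * ((t2/2 : ℝ):ℂ) = 0 := by ring
    rw [this, Complex.exp_zero]
  rw [hc, h3, hsplit]
  set X := Complex.exp (Complex.I * ((t2/2 : ℝ):ℂ))
  set Y := Complex.exp (-Complex.I * ((t2/2 : ℝ):ℂ))
  set E1 := Complex.exp (-Complex.I*(t1:ℂ))
  linear_combination (w/2) * h1 - (E1*Y*Y*X*Q*(starRingEnd ℂ) w/2) * h2
    + (E1*Q*(starRingEnd ℂ) w*(X*Y+1)/2) * hXY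

lemma normSq_faceDir (Γ : Isoradial) (e : ℂ × ℂ) : Complex.normSq (faceDir Γ e) = 1 := by
  rw [faceDir, map_mul, normSq_dirL, normSq_exp_I_real 0 _ (by simp)]
  norm_num

lemma sq_faceDir (Γ : Isoradial) (e : ℂ × ℂ) :
    (faceDir Γ e)^2 = Complex.exp (-Complex.I * (Γ.θ (ue e) : ℂ)) * (dirL e)^2 := by
  rw [faceDir, mul_pow, sq, ← Complex.exp_add]
  congr 2
  ring

lemma pair_identity (Γ : Isoradial) (f : Sym2 ℂ → ℂ) (z : ℂ) (e₁ e₂ : ℂ × ℂ)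
    (h : ConsecIn Γ.D z e₁ e₂) :
    ((Real.sin (Γ.θ (ue e₂)/2) : ℝ) : ℂ) * ((Real.cos (Γ.θ (ue e₁)/2) : ℝ) : ℂ)
        * Complex.exp (-Complex.I * ((Γ.θ (ue e₁) : ℝ) : ℂ)/2)
        * KWop Γ (critX Γ) (Sproj Γ f) e₁
      - ((Real.sin (Γ.θ (ue e₁)/2) : ℝ) : ℂ) * ((Real.cos (Γ.θ (ue e₂)/2) : ℝ) : ℂ)
        * Complex.exp (Complex.I * ((Γ.θ (ue e₂) : ℝ) : ℂ)/2)
        * KWop Γ (critX Γ) (Sproj Γ f) e₂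
    = ((Real.sin (Γ.θ (ue e₁)/2) : ℝ) : ℂ) * ((Real.sin (Γ.θ (ue e₂)/2) : ℝ) : ℂ) *
      (projL (faceDir Γ e₁) (f (ue e₁)) - projL (faceDir Γ e₁) (f (ue e₂))) := by
  obtain ⟨h1, h2, h3, h4, h5, hmin⟩ := h
  set t1 := Γ.θ (ue e₁) with ht1
  set t2 := Γ.θ (ue e₂) with ht2
  have hne1 : e₁.1 ≠ e₁.2 := Γ.nd e₁ h1
  have hne2 : e₂.1 ≠ e₂.2 := Γ.nd e₂ h2
  have ht1pos : 0 < t1 := Γ.θpos e₁ h1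
  have ht2pos : 0 < t2 := Γ.θpos e₂ h2
  have ha : ang e₁ e₂ = t1 + t2 := Γ.consecAngle z e₁ e₂ ⟨h1, h2, h3, h4, h5, hmin⟩
  have ht1lt : t1 < Real.pi := Γ.θlt e₁ h1
  have ht2lt : t2 < Real.pi := Γ.θlt e₂ h2
  have hc1pos : 0 < Real.cos (t1/2) := Real.cos_pos_of_mem_Ioo ⟨by linarith, by linarith⟩
  have hc2pos : 0 < Real.cos (t2/2) := Real.cos_pos_of_mem_Ioo ⟨by linarith, by linarith⟩
  have hs1pos : 0 < Real.sin (t1/2) := Real.sin_pos_of_pos_of_lt_pi (by linarith) (by linarith [Real.pi_pos])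
  have hs2pos : 0 < Real.sin (t2/2) := Real.sin_pos_of_pos_of_lt_pi (by linarith) (by linarith [Real.pi_pos])
  have hapos : 0 < ang e₁ e₂ := by rw [ha]; linarith
  have hF2 : ang e₁ (rev e₂) = t1 + t2 - Real.pi := by
    rw [ang_rev_right e₁ e₂ hne1 hne2 hapos, ha]
  have hF3 : ang e₂ (rev e₁) = Real.pi - t1 - t2 := by
    rw [ang_rev_left e₁ e₂ hne1 hne2 hapos, ha]; ring
  have h12 : e₁.2 = e₂.2 := h3.trans h4.symm
  -- unfold the two KW operators
  rw [KWop, KWop, if_pos h1, if_pos h2]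
  have hsets : (Γ.finOut e₂.2).toFinset = (Γ.finOut e₁.2).toFinset := by
    ext g
    simp only [Set.Finite.mem_toFinset, Set.mem_setOf_eq, h12]
  rw [hsets]
  set s := (Γ.finOut e₁.2).toFinset with hs
  set C1 := ((Real.sin (t2/2) : ℝ) : ℂ) * ((Real.cos (t1/2) : ℝ) : ℂ)
      * Complex.exp (-Complex.I * ((t1 : ℝ) : ℂ)/2) with hC1
  set C2 := ((Real.sin (t1/2) : ℝ) : ℂ) * ((Real.cos (t2/2) : ℝ) : ℂ)
      * Complex.exp (Complex.I * ((t2 : ℝ) : ℂ)/2) with hC2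
  set T1 : (ℂ × ℂ) → ℂ := fun g =>
    if g ≠ rev e₁ then (critX Γ (ue e₁) : ℂ) * Complex.exp (Complex.I * (ang e₁ g : ℂ) / 2) * Sproj Γ f g
    else 0 with hT1
  set T2 : (ℂ × ℂ) → ℂ := fun g =>
    if g ≠ rev e₂ then (critX Γ (ue e₂) : ℂ) * Complex.exp (Complex.I * (ang e₂ g : ℂ) / 2) * Sproj Γ f g
    else 0 with hT2
  have hstep1 : C1 * (Sproj Γ f e₁ - ∑ g ∈ s, T1 g) - C2 * (Sproj Γ f e₂ - ∑ g ∈ s, T2 g)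
      = C1 * Sproj Γ f e₁ - C2 * Sproj Γ f e₂ - ∑ g ∈ s, (C1 * T1 g - C2 * T2 g) := by
    rw [Finset.sum_sub_distrib, ← Finset.mul_sum, ← Finset.mul_sum]; ring
  rw [hstep1]
  -- split the sum
  have hG1s : rev e₁ ∈ s := by
    simp only [hs, Set.Finite.mem_toFinset, Set.mem_setOf_eq]
    exact ⟨Γ.symm e₁ h1, rfl⟩
  have hG12 : rev e₁ ≠ rev e₂ := fun hh => h5 (rev_inj hh)
  have hG2s : rev e₂ ∈ s.erase (rev e₁) := by
    simp only [Finset.mem_erase]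
    refine ⟨hG12.symm, ?_⟩
    simp only [hs, Set.Finite.mem_toFinset, Set.mem_setOf_eq]
    exact ⟨Γ.symm e₂ h2, h12.symm⟩
  have hsum : ∑ g ∈ s, (C1 * T1 g - C2 * T2 g)
      = (C1 * T1 (rev e₁) - C2 * T2 (rev e₁)) + (C1 * T1 (rev e₂) - C2 * T2 (rev e₂))
        + ∑ g ∈ (s.erase (rev e₁)).erase (rev e₂), (C1 * T1 g - C2 * T2 g) := by
    rw [← Finset.add_sum_erase s _ hG1s, ← Finset.add_sum_erase _ _ hG2s]
    ring
  rw [hsum]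
  -- the bulk of the sum vanishes
  have hrest : ∑ g ∈ (s.erase (rev e₁)).erase (rev e₂), (C1 * T1 g - C2 * T2 g) = 0 := by
    apply Finset.sum_eq_zero
    intro g hg
    have hg2 : g ≠ rev e₂ := (Finset.mem_erase.mp hg).1
    have hg1 : g ≠ rev e₁ := (Finset.mem_erase.mp (Finset.mem_erase.mp hg).2).1
    have hgs : g ∈ s := (Finset.mem_erase.mp (Finset.mem_erase.mp hg).2).2
    have hgD : g ∈ Γ.D := by
      have := hgs; simp only [hs, Set.Finite.mem_toFinset, Set.mem_setOf_eq] at this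
      exact this.1
    have hgz : g.1 = z := by
      have := hgs; simp only [hs, Set.Finite.mem_toFinset, Set.mem_setOf_eq] at this
      rw [this.2, h3]
    have hgne : g.1 ≠ g.2 := Γ.nd g hgD
    have hang : ang e₁ g = (t1 + t2) + ang e₂ g := by
      have := Γ.angAdd z e₁ e₂ g ⟨h1, h2, h3, h4, h5, hmin⟩ hgD hgz hg1 hg2
      rw [ha] at this; linarith
    have hc1ne : Real.cos (t1/2) ≠ 0 := hc1pos.ne'
    have hc2ne : Real.cos (t2/2) ≠ 0 := hc2pos.ne'
    have r1c : (Real.tan (t1/2) : ℂ) * (Real.cos (t1/2) : ℂ) = (Real.sin (t1/2) : ℂ) := by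
      exact_mod_cast congrArg Complex.ofReal (Real.tan_mul_cos hc1ne)
    have r2c : (Real.tan (t2/2) : ℂ) * (Real.cos (t2/2) : ℂ) = (Real.sin (t2/2) : ℂ) := by
      exact_mod_cast congrArg Complex.ofReal (Real.tan_mul_cos hc2ne)
    have hEsplit : Complex.exp (Complex.I * ((ang e₁ g : ℝ) : ℂ)/2)
        = Complex.exp (Complex.I * ((t1 : ℝ) : ℂ)/2) * Complex.exp (Complex.I * ((t2 : ℝ) : ℂ)/2)
          * Complex.exp (Complex.I * ((ang e₂ g : ℝ) : ℂ)/2) := by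
      rw [← Complex.exp_add, ← Complex.exp_add]
      congr 1
      rw [hang]; push_cast; ring
    have hcan : Complex.exp (-Complex.I * ((t1 : ℝ) : ℂ)/2) * Complex.exp (Complex.I * ((t1 : ℝ) : ℂ)/2) = 1 := by
      rw [← Complex.exp_add, show -Complex.I * ((t1 : ℝ) : ℂ)/2 + Complex.I * ((t1 : ℝ) : ℂ)/2 = 0 by ring,
        Complex.exp_zero]
    have hx1 : critX Γ (ue e₁) = Real.tan (t1/2) := rfl
    have hx2 : critX Γ (ue e₂) = Real.tan (t2/2) := rfl
    rw [hT1, hT2]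
    simp only [if_pos hg1, if_pos hg2, hx1, hx2, hC1, hC2]
    rw [hEsplit]
    linear_combination ((Real.sin (t2/2) : ℂ) * Complex.exp (-Complex.I * ((t1 : ℝ) : ℂ)/2)
        * Complex.exp (Complex.I * ((t1 : ℝ) : ℂ)/2) * Complex.exp (Complex.I * ((t2 : ℝ) : ℂ)/2)
        * Complex.exp (Complex.I * ((ang e₂ g : ℝ) : ℂ)/2) * Sproj Γ f g) * r1c
      + ((Real.sin (t1/2) : ℂ) * (Real.sin (t2/2) : ℂ) * Complex.exp (Complex.I * ((t2 : ℝ) : ℂ)/2)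
        * Complex.exp (Complex.I * ((ang e₂ g : ℝ) : ℂ)/2) * Sproj Γ f g) * hcan
      - ((Real.sin (t1/2) : ℂ) * Complex.exp (Complex.I * ((t2 : ℝ) : ℂ)/2)
        * Complex.exp (Complex.I * ((ang e₂ g : ℝ) : ℂ)/2) * Sproj Γ f g) * r2c
  rw [hrest]
  have hx1 : critX Γ (ue e₁) = Real.tan (t1/2) := rfl
  have hx2 : critX Γ (ue e₂) = Real.tan (t2/2) := rfl
  have hT1G1 : T1 (rev e₁) = 0 := by rw [hT1]; simp
  have hT2G2 : T2 (rev e₂) = 0 := by rw [hT2]; simp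
  have hT2G1 : T2 (rev e₁) = ((Real.tan (t2/2) : ℝ) : ℂ)
      * Complex.exp (Complex.I * ((Real.pi - t1 - t2 : ℝ) : ℂ)/2) * Sproj Γ f (rev e₁) := by
    simp only [hT2]
    rw [if_pos hG12, hF3, hx2]
  have hT1G2 : T1 (rev e₂) = ((Real.tan (t1/2) : ℝ) : ℂ)
      * Complex.exp (Complex.I * ((t1 + t2 - Real.pi : ℝ) : ℂ)/2) * Sproj Γ f (rev e₂) := by
    simp only [hT1]
    rw [if_pos hG12.symm, hF2, hx1]
  have hS1 : Sproj Γ f e₁ = ((Real.sin (t1/2) : ℝ) : ℂ) * projL (dirL e₁) (f (ue e₁)) := rfl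
  have hS2 : Sproj Γ f e₂ = ((Real.sin (t2/2) : ℝ) : ℂ) * projL (dirL e₂) (f (ue e₂)) := rfl
  have hSG1 : Sproj Γ f (rev e₁) = ((Real.sin (t1/2) : ℝ) : ℂ) * projL (dirL (rev e₁)) (f (ue e₁)) := by
    rw [Sproj, ue_rev]
  have hSG2 : Sproj Γ f (rev e₂) = ((Real.sin (t2/2) : ℝ) : ℂ) * projL (dirL (rev e₂)) (f (ue e₂)) := by
    rw [Sproj, ue_rev]
  rw [hT1G1, hT2G2, hT2G1, hT1G2, hS1, hS2, hSG1, hSG2]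
  -- squares of the line directions
  have hQ1 : (dirL (rev e₁))^2 = -(dirL e₁)^2 := sq_dirL_rev e₁ hne1
  have hQν : (faceDir Γ e₁)^2 = Complex.exp (-Complex.I * ((t1 : ℝ) : ℂ)) * (dirL e₁)^2 :=
    sq_faceDir Γ e₁
  have hQ2' : (dirL (rev e₂))^2
      = -(Complex.exp (-Complex.I * (((t1 : ℝ) : ℂ) + ((t2 : ℝ) : ℂ))) * (dirL e₁)^2) := by
    rw [sq_dirL_rev_ratio e₁ e₂ hne1 hne2, ha, hQ1]
    rw [show (-Complex.I * (((t1 + t2 : ℝ)) : ℂ)) = -Complex.I * (((t1 : ℝ) : ℂ) + ((t2 : ℝ) : ℂ)) by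
      push_cast; ring]
    ring
  have hQ2 : (dirL e₂)^2
      = Complex.exp (-Complex.I * (((t1 : ℝ) : ℂ) + ((t2 : ℝ) : ℂ))) * (dirL e₁)^2 := by
    have h' := sq_dirL_rev e₂ hne2
    rw [hQ2'] at h'
    linear_combination h'
  -- projections in closed form
  rw [projL_eq _ _ (normSq_dirL e₁), projL_eq _ _ (normSq_dirL e₂),
    projL_eq _ _ (normSq_dirL (rev e₁)), projL_eq _ _ (normSq_dirL (rev e₂)),
    projL_eq _ _ (normSq_faceDir Γ e₁), projL_eq _ _ (normSq_faceDir Γ e₁),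
    hQ1, hQ2, hQ2', hQν]
  have k1 := key1 t1 t2 ((dirL e₁)^2) (f (ue e₁))
  have k2 := key2 t1 t2 ((dirL e₁)^2) (f (ue e₂))
  have hc1ne : Real.cos (t1/2) ≠ 0 := hc1pos.ne'
  have hc2ne : Real.cos (t2/2) ≠ 0 := hc2pos.ne'
  have r1c : (Real.tan (t1/2) : ℂ) * (Real.cos (t1/2) : ℂ) = (Real.sin (t1/2) : ℂ) := by
    exact_mod_cast congrArg Complex.ofReal (Real.tan_mul_cos hc1ne)
  have r2c : (Real.tan (t2/2) : ℂ) * (Real.cos (t2/2) : ℂ) = (Real.sin (t2/2) : ℂ) := by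
    exact_mod_cast congrArg Complex.ofReal (Real.tan_mul_cos hc2ne)
  rw [hC1, hC2]
  linear_combination ((Real.sin (t1/2) : ℂ) * (Real.sin (t2/2) : ℂ)) * k1
    - ((Real.sin (t1/2) : ℂ) * (Real.sin (t2/2) : ℂ)) * k2
    + ((Real.sin (t1/2) : ℂ) * (Real.sin (t1/2) : ℂ)
        * Complex.exp (Complex.I * ((t2 : ℝ) : ℂ)/2)
        * Complex.exp (Complex.I * ((Real.pi - t1 - t2 : ℝ) : ℂ)/2)
        * ((f (ue e₁) + -(dirL e₁)^2 * (starRingEnd ℂ) (f (ue e₁)))/2)) * r2c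
    - ((Real.sin (t2/2) : ℂ) * (Real.sin (t2/2) : ℂ)
        * Complex.exp (-Complex.I * ((t1 : ℝ) : ℂ)/2)
        * Complex.exp (Complex.I * ((t1 + t2 - Real.pi : ℝ) : ℂ)/2)
        * ((f (ue e₂) + -(Complex.exp (-Complex.I * (((t1 : ℝ) : ℂ) + ((t2 : ℝ) : ℂ))) * (dirL e₁)^2) * (starRingEnd ℂ) (f (ue e₂)))/2)) * r1c

lemma sin_half_pos (Γ : Isoradial) (e : ℂ × ℂ) (he : e ∈ Γ.D) : 0 < Real.sin (Γ.θ (ue e)/2) :=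
  Real.sin_pos_of_pos_of_lt_pi (by linarith [Γ.θpos e he]) (by linarith [Γ.θlt e he, Real.pi_pos])

lemma cos_half_pos (Γ : Isoradial) (e : ℂ × ℂ) (he : e ∈ Γ.D) : 0 < Real.cos (Γ.θ (ue e)/2) :=
  Real.cos_pos_of_mem_Ioo ⟨by linarith [Γ.θpos e he, Real.pi_pos], by linarith [Γ.θlt e he]⟩


/-- on an isoradial graph with critical weights, `f` is s-holomorphic at a
vertex `z` (all of whose incident edges belong to the graph, i.e. an interior vertex) if
and only if `T(Sf)(e) = 0` for every directed edge `e` pointing at `z`. -/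
theorem sHolomorphic_iff_KW_of_Sproj_eq_zero
    (Γ : Isoradial) (f : Sym2 ℂ → ℂ) (z : ℂ) :
    SHolAt Γ f z ↔ ∀ e ∈ Γ.D, e.2 = z → KWop Γ (critX Γ) (Sproj Γ f) e = 0 := by
  constructor
  · -- s-holomorphic → KW vanishes
    intro hshol e he hez
    -- the relation function
    set μ : (ℂ × ℂ) → ℂ := fun x =>
      ((Real.cos (Γ.θ (ue x)/2) : ℝ) : ℂ) / ((Real.sin (Γ.θ (ue x)/2) : ℝ) : ℂ)
        * KWop Γ (critX Γ) (Sproj Γ f) x with hμ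
    have hrel : ∀ x y, ConsecIn Γ.D z x y →
        μ y = Complex.exp (-Complex.I * ((Γ.θ (ue x) + Γ.θ (ue y) : ℝ) : ℂ)/2) * μ x := by
      intro x y hc
      have hp := pair_identity Γ f z x y hc
      rw [hshol x y hc, sub_self, mul_zero] at hp
      have hsx : ((Real.sin (Γ.θ (ue x)/2) : ℝ) : ℂ) ≠ 0 := by
        exact_mod_cast (sin_half_pos Γ x hc.1).ne'
      have hsy : ((Real.sin (Γ.θ (ue y)/2) : ℝ) : ℂ) ≠ 0 := by
        exact_mod_cast (sin_half_pos Γ y hc.2.1).ne'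
      have hexp : Complex.exp (-Complex.I * ((Γ.θ (ue x) + Γ.θ (ue y) : ℝ) : ℂ)/2)
          * Complex.exp (Complex.I * ((Γ.θ (ue y) : ℝ) : ℂ)/2)
          = Complex.exp (-Complex.I * ((Γ.θ (ue x) : ℝ) : ℂ)/2) := by
        rw [← Complex.exp_add]; congr 1; push_cast; ring
      have hYY : Complex.exp (Complex.I * ((Γ.θ (ue y) : ℝ) : ℂ)/2)
          * Complex.exp (-Complex.I * ((Γ.θ (ue y) : ℝ) : ℂ)/2) = 1 := by
        rw [← Complex.exp_add, show Complex.I * ((Γ.θ (ue y) : ℝ) : ℂ)/2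
          + -Complex.I * ((Γ.θ (ue y) : ℝ) : ℂ)/2 = 0 by ring, Complex.exp_zero]
      rw [hμ]
      simp only
      push_cast at hp hsx hsy hexp ⊢
      set X' := Complex.exp (-Complex.I * ((Γ.θ (ue x) : ℝ) : ℂ)/2)
      set Y' := Complex.exp (Complex.I * ((Γ.θ (ue y) : ℝ) : ℂ)/2)
      set Y'' := Complex.exp (-Complex.I * ((Γ.θ (ue y) : ℝ) : ℂ)/2)
      set E := Complex.exp (-Complex.I * (((Γ.θ (ue x) : ℝ) : ℂ) + ((Γ.θ (ue y) : ℝ) : ℂ))/2)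
      set Kx := KWop Γ (critX Γ) (Sproj Γ f) x
      set Ky := KWop Γ (critX Γ) (Sproj Γ f) y
      set cx := Complex.cos (((Γ.θ (ue x) : ℝ) : ℂ)/2)
      set cy := Complex.cos (((Γ.θ (ue y) : ℝ) : ℂ)/2)
      set sx := Complex.sin (((Γ.θ (ue x) : ℝ) : ℂ)/2)
      set sy := Complex.sin (((Γ.θ (ue y) : ℝ) : ℂ)/2)
      field_simp
      linear_combination (-Y'') * hp + (-(Y'' * cx * Kx * sy)) * hexp
        + (E * cx * Kx * sy - sx * cy * Ky) * hYY
    -- the set of edges pointing at z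
    have hInFin : {x : ℂ × ℂ | x ∈ Γ.D ∧ x.2 = z}.Finite := by
      have hsub : {x : ℂ × ℂ | x ∈ Γ.D ∧ x.2 = z} = rev '' {g | g ∈ Γ.D ∧ g.1 = z} := by
        ext x
        constructor
        · rintro ⟨hxD, hxz⟩
          exact ⟨rev x, ⟨Γ.symm x hxD, hxz⟩, rfl⟩
        · rintro ⟨g, ⟨hgD, hgz⟩, rfl⟩
          exact ⟨Γ.symm g hgD, hgz⟩
      rw [hsub]
      exact (Γ.finOut z).image rev
    -- existence of a consecutive successor
    have hsucc : ∀ x, x ∈ Γ.D → x.2 = z → ∃ y, ConsecIn Γ.D z x y := by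
      intro x hxD hxz
      have hne : ((hInFin.toFinset).erase x).Nonempty := by
        rcases Finset.eq_empty_or_nonempty ((hInFin.toFinset).erase x) with hemp | hne
        · exfalso
          have hall : ∀ y, y ∈ Γ.D → y.2 = z → y = x := by
            intro y hyD hyz
            by_contra hyx
            have : y ∈ (hInFin.toFinset).erase x := by
              rw [Finset.mem_erase, Set.Finite.mem_toFinset]
              exact ⟨hyx, hyD, hyz⟩
            rw [hemp] at this
            exact absurd this (Finset.notMem_empty y)
          have hOut : (Γ.finOut z).toFinset = {rev x} := by
            ext g
            rw [Set.Finite.mem_toFinset, Finset.mem_singleton]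
            constructor
            · rintro ⟨hgD, hgz⟩
              have h1 : rev g ∈ Γ.D := Γ.symm g hgD
              have h2 : (rev g).2 = z := hgz
              have := hall (rev g) h1 h2
              rw [← rev_rev g, this]
            · rintro rfl
              exact ⟨Γ.symm x hxD, hxz⟩
          have hsum := Γ.angleSum z ⟨rev x, Γ.symm x hxD, hxz⟩
          rw [hOut, Finset.sum_singleton, ue_rev] at hsum
          exact absurd hsum (ne_of_lt (Γ.θlt x hxD))
        · exact hne
      obtain ⟨y, hy, hmin⟩ := Finset.exists_min_image _ (fun g => ccw (rev x) (rev g)) hne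
      rw [Finset.mem_erase, Set.Finite.mem_toFinset] at hy
      refine ⟨y, hxD, hy.2.1, hxz, hy.2.2, Ne.symm hy.1, ?_⟩
      intro g hgD hgz hgx hgy
      apply hmin
      rw [Finset.mem_erase, Set.Finite.mem_toFinset]
      exact ⟨hgx, hgD, hgz⟩
    -- choice of successor
    have hchoice : ∀ x : ℂ × ℂ, ∃ y, (x ∈ Γ.D ∧ x.2 = z) → ConsecIn Γ.D z x y := by
      intro x
      by_cases hx : x ∈ Γ.D ∧ x.2 = z
      · obtain ⟨y, hy⟩ := hsucc x hx.1 hx.2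
        exact ⟨y, fun _ => hy⟩
      · exact ⟨x, fun h => absurd h hx⟩
    choose sfun hsfun using hchoice
    -- the orbit
    set u : ℕ → ℂ × ℂ := fun n => sfun^[n] e with hu
    have hustep : ∀ n, u (n+1) = sfun (u n) := by
      intro n
      rw [hu]
      exact Function.iterate_succ_apply' sfun n e
    have huIn : ∀ n, u n ∈ Γ.D ∧ (u n).2 = z := by
      intro n
      induction n with
      | zero => exact ⟨he, hez⟩
      | succ n ih =>
        have hc := hsfun (u n) ih
        rw [hustep]
        exact ⟨hc.2.1, hc.2.2.2.1⟩
    have hcons : ∀ n, ConsecIn Γ.D z (u n) (u (n+1)) := by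
      intro n
      rw [hustep]
      exact hsfun (u n) (huIn n)
    -- pigeonhole: the orbit repeats
    have hnotinj : ¬ Function.Injective u := by
      intro hinj
      exact (Set.infinite_of_injective_forall_mem hinj (fun n => huIn n)) hInFin
    have hex : ∃ b, ∃ a, a < b ∧ u a = u b := by
      rw [Function.not_injective_iff] at hnotinj
      obtain ⟨i, j, hij, hne⟩ := hnotinj
      rcases lt_or_gt_of_ne hne with h | h
      · exact ⟨j, i, h, hij⟩
      · exact ⟨i, j, h, hij.symm⟩
    classical
    set b₀ := Nat.find hex with hb₀
    obtain ⟨a₀, hab, hua⟩ := Nat.find_spec hex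
    -- u is injective on [0, b₀)
    have hinjIco : ∀ i j, i < j → j < b₀ → u i ≠ u j := by
      intro i j hij hjb hne
      exact Nat.find_min hex hjb ⟨i, hij, hne⟩
    -- step relation for μ along the orbit
    have hμstep : ∀ n, μ (u (n+1)) =
        Complex.exp (-Complex.I * ((Γ.θ (ue (u n)) + Γ.θ (ue (u (n+1))) : ℝ) : ℂ)/2) * μ (u n) :=
      fun n => hrel (u n) (u (n+1)) (hcons n)
    -- product formula
    have hprod : ∀ m, a₀ ≤ m → μ (u m) =
        Complex.exp (-Complex.I * (((∑ k ∈ Finset.Ico a₀ m,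
          (Γ.θ (ue (u k)) + Γ.θ (ue (u (k+1))))) : ℝ) : ℂ)/2) * μ (u a₀) := by
      intro m hm
      induction m, hm using Nat.le_induction with
      | base => simp
      | succ m hm ih =>
        rw [hμstep m, ih, Finset.sum_Ico_succ_top hm, ← mul_assoc, ← Complex.exp_add]
        congr 2
        push_cast
        ring
    -- the angle sum telescopes
    have hshift : ∀ m, a₀ ≤ m → ∑ k ∈ Finset.Ico a₀ m, (Γ.θ (ue (u k)) + Γ.θ (ue (u (k+1))))
        = 2 * (∑ k ∈ Finset.Ico a₀ m, Γ.θ (ue (u k))) - Γ.θ (ue (u a₀)) + Γ.θ (ue (u m)) := by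
      intro m hm
      induction m, hm using Nat.le_induction with
      | base => simp
      | succ m hm ih =>
        rw [Finset.sum_Ico_succ_top hm, ih, Finset.sum_Ico_succ_top hm]
        ring
    set W := ∑ k ∈ Finset.Ico a₀ b₀, Γ.θ (ue (u k)) with hW
    have hWsum : ∑ k ∈ Finset.Ico a₀ b₀, (Γ.θ (ue (u k)) + Γ.θ (ue (u (k+1)))) = 2 * W := by
      rw [hshift b₀ hab.le, ← hua]
      ring
    -- positivity of W
    have hWpos : 0 < W := by
      rw [hW]
      apply Finset.sum_pos
      · intro k hk
        exact Γ.θpos (u k) (huIn k).1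
      · exact ⟨a₀, Finset.mem_Ico.mpr ⟨le_refl _, hab⟩⟩
    -- W ≤ π
    have hWle : W ≤ Real.pi := by
      have hinj2 : Set.InjOn (fun k => rev (u k)) (Finset.Ico a₀ b₀) := by
        intro i hi j hj hrev
        simp only [Finset.coe_Ico, Set.mem_Ico] at hi hj
        have := rev_inj hrev
        by_contra hne
        rcases lt_or_gt_of_ne hne with h | h
        · exact hinjIco i j h hj.2 this
        · exact hinjIco j i h hi.2 this.symm
      have heq : W = ∑ g ∈ (Finset.Ico a₀ b₀).image (fun k => rev (u k)), Γ.θ (ue g) := by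
        rw [Finset.sum_image (fun x hx y hy hxy => hinj2 hx hy hxy), hW]
        apply Finset.sum_congr rfl
        intro k _
        rw [ue_rev]
      have hsub : (Finset.Ico a₀ b₀).image (fun k => rev (u k)) ⊆ (Γ.finOut z).toFinset := by
        intro g hg
        rw [Finset.mem_image] at hg
        obtain ⟨k, _, rfl⟩ := hg
        rw [Set.Finite.mem_toFinset]
        exact ⟨Γ.symm (u k) (huIn k).1, (huIn k).2⟩
      have hmono : ∑ g ∈ (Finset.Ico a₀ b₀).image (fun k => rev (u k)), Γ.θ (ue g)
          ≤ ∑ g ∈ (Γ.finOut z).toFinset, Γ.θ (ue g) := by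
        apply Finset.sum_le_sum_of_subset_of_nonneg hsub
        intro g hg _
        rw [Set.Finite.mem_toFinset] at hg
        exact (Γ.θpos g hg.1).le
      rw [heq]
      rw [Γ.angleSum z ⟨rev e, Γ.symm e he, hez⟩] at hmono
      exact hmono
    -- exp(-I W) ≠ 1
    have hexpne : Complex.exp (-Complex.I * ((W : ℝ) : ℂ)) ≠ 1 := by
      intro hone
      rw [Complex.exp_eq_one_iff] at hone
      obtain ⟨n, hn⟩ := hone
      have him := congrArg Complex.im hn
      simp [Complex.mul_im, Complex.mul_re] at him
      -- him : -W = n * (2 * π)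
      rcases le_or_gt 0 (n : ℝ) with hn0 | hn0
      · nlinarith [Real.pi_pos]
      · have hn' : n < 0 := by exact_mod_cast hn0
        have hn1 : (n : ℝ) ≤ -1 := by
          have : n ≤ -1 := by omega
          exact_mod_cast this
        nlinarith [Real.pi_pos]
    -- conclude μ (u a₀) = 0
    have hμa : μ (u a₀) = 0 := by
      have h1 := hprod b₀ hab.le
      rw [hWsum, ← hua] at h1
      have h2 : Complex.exp (-Complex.I * (((2 * W : ℝ)) : ℂ)/2) = Complex.exp (-Complex.I * ((W : ℝ) : ℂ)) := by
        congr 1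
        push_cast
        ring
      rw [h2] at h1
      have h3 : (1 - Complex.exp (-Complex.I * ((W : ℝ) : ℂ))) * μ (u a₀) = 0 := by
        linear_combination h1
      rcases mul_eq_zero.mp h3 with h4 | h4
      · exact absurd (by linear_combination -h4) hexpne
      · exact h4
    -- propagate back to n = 0
    have hzero : ∀ n, μ (u n) = 0 → μ (u 0) = 0 := by
      intro n
      induction n with
      | zero => exact id
      | succ n ih =>
        intro hn1
        rw [hμstep n] at hn1
        rcases mul_eq_zero.mp hn1 with h | h
        · exact absurd h (Complex.exp_ne_zero _)
        · exact ih h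
    have hμe : μ e = 0 := hzero a₀ hμa
    -- conclude
    rw [hμ] at hμe
    simp only at hμe
    rcases mul_eq_zero.mp hμe with h | h
    · exfalso
      rcases div_eq_zero_iff.mp h with h' | h'
      · have := cos_half_pos Γ e he
        rw [Complex.ofReal_eq_zero] at h'
        linarith
      · have := sin_half_pos Γ e he
        rw [Complex.ofReal_eq_zero] at h'
        linarith
    · exact h
  · -- KW vanishes → s-holomorphic
    intro hKW e₁ e₂ hcons
    have hp := pair_identity Γ f z e₁ e₂ hcons
    rw [hKW e₁ hcons.1 hcons.2.2.1, hKW e₂ hcons.2.1 hcons.2.2.2.1, mul_zero, mul_zero,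
      sub_zero] at hp
    have hs1 : ((Real.sin (Γ.θ (ue e₁)/2) : ℝ) : ℂ) ≠ 0 := by
      exact_mod_cast (sin_half_pos Γ e₁ hcons.1).ne'
    have hs2 : ((Real.sin (Γ.θ (ue e₂)/2) : ℝ) : ℂ) ≠ 0 := by
      exact_mod_cast (sin_half_pos Γ e₂ hcons.2.1).ne'
    have := mul_eq_zero.mp hp.symm
    rcases this with h | h
    · rcases mul_eq_zero.mp h with h' | h'
      · exact absurd h' hs1
      · exact absurd h' hs2
    · exact sub_eq_zero.mp h
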